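/- arXiv:2307.09254 — 3 statements merged into one kernel-verified Lean document; each statement's English description precedes it below -/
import Mathlib

section
/- Let D be a probability measure on a measurable space α, let ℋ be a finite nonempty set of nonnegative real numbers containing 0, and let (E_τ)_{τ ∈ ℋ} be measurable subsets of α such that E_{τ₁} ⊆ E_{τ₂} whenever τ₁ ≤ τ₂ and E_0 = ∅. Fix ε ∈ (0, 1), δ ∈ (0, 1), and n ∈ ℕ. For a sample z ∈ α^n define k_τ(z) := #{i : zᵢ ∈ E_τ}, and define τ̂(z) as the maximum of {τ ∈ ℋ : U_Binom(k_τ(z); n, δ) ≤ ε} if this set is nonempty, and τ̂(z) := 0 otherwise. Then D^n({z ∈ α^n : D(E_{τ̂(z)}) ≤ ε}) ≥ 1 − δ; that is, the learned parameter controls the risk D(E_{τ̂}) at level ε with probability at least 1 − δ over the i.i.d. calibration sample. -/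
open MeasureTheory Finset
open scoped ENNReal Classical

/-- The binomial CDF `F(k; n, θ) = ∑_{i=0}^k C(n,i) θ^i (1-θ)^(n-i)`. -/
noncomputable def binomCDF (k n : ℕ) (θ : ℝ) : ℝ :=
  ∑ i ∈ Finset.range (k + 1), (n.choose i : ℝ) * θ ^ i * (1 - θ) ^ (n - i)

/-- The upper binomial tail bound
`U_Binom(k; n, δ) := inf ({θ ∈ [0,1] : F(k; n, θ) ≤ δ} ∪ {1})`. -/
noncomputable def UBinom (k n : ℕ) (δ : ℝ) : ℝ :=
  sInf ({θ : ℝ | θ ∈ Set.Icc (0 : ℝ) 1 ∧ binomCDF k n θ ≤ δ} ∪ {1})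

/-! ### Auxiliary lemmas about `binomCDF` -/

lemma binomCDF_term_nonneg {θ : ℝ} (h0 : 0 ≤ θ) (h1 : θ ≤ 1) (n i : ℕ) :
    0 ≤ (n.choose i : ℝ) * θ ^ i * (1 - θ) ^ (n - i) := by
  have : (0:ℝ) ≤ 1 - θ := by linarith
  positivity

lemma binomCDF_nonneg {θ : ℝ} (h0 : 0 ≤ θ) (h1 : θ ≤ 1) (k n : ℕ) :
    0 ≤ binomCDF k n θ :=
  Finset.sum_nonneg fun i _ => binomCDF_term_nonneg h0 h1 n i

lemma binomCDF_mono_k {θ : ℝ} (h0 : 0 ≤ θ) (h1 : θ ≤ 1) {k₁ k₂ : ℕ} (h : k₁ ≤ k₂) (n : ℕ) :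
    binomCDF k₁ n θ ≤ binomCDF k₂ n θ := by
  apply Finset.sum_le_sum_of_subset_of_nonneg
  · exact Finset.range_subset_range.2 (by omega)
  · intro i _ _; exact binomCDF_term_nonneg h0 h1 n i

lemma binomCDF_continuous (k n : ℕ) : Continuous fun θ : ℝ => binomCDF k n θ := by
  unfold binomCDF
  exact continuous_finset_sum _ fun i _ => by continuity

/-! ### Counting samples in a set, and its distribution -/

noncomputable def cnt {α : Type*} (S : Set α) (n : ℕ) (z : Fin n → α) : ℕ :=
  (Finset.univ.filter fun i => z i ∈ S).card

lemma cnt_le {α : Type*} (S : Set α) (n : ℕ) (z : Fin n → α) : cnt S n z ≤ n := by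
  simpa [cnt] using (Finset.card_filter_le Finset.univ fun i : Fin n => z i ∈ S)

lemma cnt_mono {α : Type*} {S T : Set α} (hST : S ⊆ T) (n : ℕ) (z : Fin n → α) :
    cnt S n z ≤ cnt T n z := by
  apply Finset.card_le_card
  intro i hi
  simp only [Finset.mem_filter] at *
  exact ⟨hi.1, hST hi.2⟩

lemma cnt_eq_set {α : Type*} (S : Set α) (n j : ℕ) :
    {z : Fin n → α | cnt S n z = j}
      = ⋃ A ∈ Finset.powersetCard j (Finset.univ : Finset (Fin n)),
          Set.pi Set.univ (fun i => if i ∈ A then S else Sᶜ) := by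
  ext z
  simp only [Set.mem_setOf_eq, Set.mem_iUnion, Finset.mem_powersetCard, Set.mem_pi,
    Set.mem_univ, forall_true_left]
  constructor
  · intro hz
    refine ⟨Finset.univ.filter fun i => z i ∈ S, ⟨Finset.subset_univ _, hz⟩, ?_⟩
    intro i
    by_cases h : z i ∈ S <;> simp [h]
  · rintro ⟨A, ⟨-, hcard⟩, hA⟩
    have : (Finset.univ.filter fun i => z i ∈ S) = A := by
      ext i
      have := hA i
      by_cases h : i ∈ A <;> simp [h] at this ⊢ <;> simp [this, h]
    rw [cnt, this, hcard]

lemma measure_cnt_eq {α : Type*} [MeasurableSpace α] (D : Measure α) [IsProbabilityMeasure D]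
    {S : Set α} (hS : MeasurableSet S) (n j : ℕ) :
    (Measure.pi fun _ : Fin n => D) {z | cnt S n z = j}
      = (n.choose j : ℝ≥0∞) * (D S) ^ j * (D Sᶜ) ^ (n - j) := by
  classical
  rw [cnt_eq_set]
  rw [measure_biUnion_finset]
  · have hval : ∀ A ∈ Finset.powersetCard j (Finset.univ : Finset (Fin n)),
        (Measure.pi fun _ : Fin n => D) (Set.pi Set.univ (fun i => if i ∈ A then S else Sᶜ))
          = (D S) ^ j * (D Sᶜ) ^ (n - j) := by
      intro A hA
      rw [Finset.mem_powersetCard] at hA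
      rw [Measure.pi_pi]
      have : ∀ i : Fin n, D (if i ∈ A then S else Sᶜ) = if i ∈ A then D S else D Sᶜ := by
        intro i; split <;> rfl
      rw [Finset.prod_congr rfl fun i _ => this i]
      rw [← Finset.prod_mul_prod_compl A]
      rw [Finset.prod_congr rfl (fun i hi => if_pos hi),
        Finset.prod_congr rfl (fun i hi => if_neg (Finset.mem_compl.1 hi))]
      rw [Finset.prod_const, Finset.prod_const, hA.2, Finset.card_compl, hA.2,
        Fintype.card_fin]
    rw [Finset.sum_congr rfl hval, Finset.sum_const, Finset.card_powersetCard,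
      Finset.card_univ, Fintype.card_fin, nsmul_eq_mul, mul_assoc]
  · intro A hA B hB hAB
    simp only [Function.onFun]
    rw [Set.disjoint_left]
    intro z hzA hzB
    apply hAB
    ext i
    have h1 := hzA i (Set.mem_univ i)
    have h2 := hzB i (Set.mem_univ i)
    by_cases hiA : i ∈ A <;> by_cases hiB : i ∈ B <;>
      simp [hiA, hiB] at h1 h2 ⊢
    · exact h2 h1
    · exact h1 h2
  · intro A hA
    exact MeasurableSet.univ_pi fun i => by split <;> [exact hS; exact hS.compl]

lemma measure_cnt_le {α : Type*} [MeasurableSpace α] (D : Measure α) [IsProbabilityMeasure D]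
    {S : Set α} (hS : MeasurableSet S) (n k : ℕ) :
    (Measure.pi fun _ : Fin n => D) {z | cnt S n z ≤ k}
      = ENNReal.ofReal (binomCDF k n (D S).toReal) := by
  classical
  have hset : {z : Fin n → α | cnt S n z ≤ k}
      = ⋃ j ∈ Finset.range (k+1), {z | cnt S n z = j} := by
    ext z
    simp only [Set.mem_setOf_eq, Set.mem_iUnion, Finset.mem_range]
    exact ⟨fun h => ⟨cnt S n z, by omega, rfl⟩, by rintro ⟨j, hj, rfl⟩; omega⟩
  have hDS : D S ≠ ⊤ := measure_ne_top D S
  have hθ0 : 0 ≤ (D S).toReal := ENNReal.toReal_nonneg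
  have hθ1 : (D S).toReal ≤ 1 := by
    have := prob_le_one (μ := D) (s := S)
    simpa using ENNReal.toReal_mono (by simp) this
  have hDSc : D Sᶜ = ENNReal.ofReal (1 - (D S).toReal) := by
    rw [measure_compl hS hDS, measure_univ]
    rw [ENNReal.ofReal_sub _ hθ0, ENNReal.ofReal_one, ENNReal.ofReal_toReal hDS]
  rw [hset, measure_biUnion_finset]
  · rw [Finset.sum_congr rfl fun j _ => measure_cnt_eq D hS n j]
    unfold binomCDF
    rw [ENNReal.ofReal_sum_of_nonneg fun i _ => binomCDF_term_nonneg hθ0 hθ1 n i]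
    apply Finset.sum_congr rfl
    intro j _
    rw [hDSc, ENNReal.ofReal_mul (by positivity), ENNReal.ofReal_mul (by positivity),
      ENNReal.ofReal_natCast, ENNReal.ofReal_pow hθ0, ENNReal.ofReal_pow (by linarith),
      ENNReal.ofReal_toReal hDS]
  · intro a ha b hb hab
    simp only [Function.onFun]
    rw [Set.disjoint_left]
    rintro z h1 h2
    simp only [Set.mem_setOf_eq] at h1 h2
    exact hab (h1 ▸ h2 ▸ rfl)
  · intro j hj
    rw [cnt_eq_set]
    apply MeasurableSet.biUnion (Finset.countable_toSet _)
    intro A hA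
    exact MeasurableSet.univ_pi fun i => by split <;> [exact hS; exact hS.compl]

/-! ### Antitonicity of the binomial CDF in `θ`, via a coupling with the uniform measure -/

noncomputable def unifMeas : Measure ℝ := volume.restrict (Set.Ioc (0:ℝ) 1)

instance : IsProbabilityMeasure unifMeas := by
  constructor
  rw [unifMeas, Measure.restrict_apply_univ, Real.volume_Ioc]
  norm_num

lemma unifMeas_Iic {θ : ℝ} (h1 : θ ≤ 1) : unifMeas (Set.Iic θ) = ENNReal.ofReal θ := by
  rw [unifMeas, Measure.restrict_apply measurableSet_Iic]
  have : Set.Iic θ ∩ Set.Ioc 0 1 = Set.Ioc 0 θ := by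
    ext x
    simp only [Set.mem_inter_iff, Set.mem_Iic, Set.mem_Ioc]
    constructor
    · rintro ⟨h, h2, h3⟩; exact ⟨h2, h⟩
    · rintro ⟨h2, h⟩; exact ⟨h, h2, le_trans h h1⟩
  rw [this, Real.volume_Ioc, sub_zero]

lemma binomCDF_anti (k n : ℕ) {θ₁ θ₂ : ℝ} (h0 : 0 ≤ θ₁) (h12 : θ₁ ≤ θ₂) (h1 : θ₂ ≤ 1) :
    binomCDF k n θ₂ ≤ binomCDF k n θ₁ := by
  have e1 := measure_cnt_le unifMeas measurableSet_Iic (S := Set.Iic θ₁) n k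
  have e2 := measure_cnt_le unifMeas measurableSet_Iic (S := Set.Iic θ₂) n k
  rw [unifMeas_Iic (le_trans h12 h1), ENNReal.toReal_ofReal h0] at e1
  rw [unifMeas_Iic h1, ENNReal.toReal_ofReal (le_trans h0 h12)] at e2
  have hsub : {z : Fin n → ℝ | cnt (Set.Iic θ₂) n z ≤ k}
      ⊆ {z | cnt (Set.Iic θ₁) n z ≤ k} := by
    intro z hz
    exact le_trans (cnt_mono (Set.Iic_subset_Iic.2 h12) n z) hz
  have := measure_mono (μ := Measure.pi fun _ : Fin n => unifMeas) hsub
  rw [e1, e2] at this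
  have h₁nn : 0 ≤ binomCDF k n θ₁ := binomCDF_nonneg h0 (le_trans h12 h1) k n
  exact (ENNReal.ofReal_le_ofReal_iff h₁nn).1 this

/-! ### Properties of `UBinom` -/

lemma UBinom_bddBelow (k n : ℕ) (δ : ℝ) :
    BddBelow ({θ : ℝ | θ ∈ Set.Icc (0 : ℝ) 1 ∧ binomCDF k n θ ≤ δ} ∪ {1}) := by
  refine ⟨0, ?_⟩
  rintro θ (⟨⟨h0, -⟩, -⟩ | h)
  · exact h0
  · simp only [Set.mem_singleton_iff] at h; rw [h]; norm_num

lemma UBinom_mono {k₁ k₂ : ℕ} (h : k₁ ≤ k₂) (n : ℕ) (δ : ℝ) :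
    UBinom k₁ n δ ≤ UBinom k₂ n δ := by
  apply csInf_le_csInf (UBinom_bddBelow k₁ n δ)
  · exact ⟨1, Or.inr rfl⟩
  · rintro θ (⟨⟨h0, h1⟩, hF⟩ | hθ)
    · exact Or.inl ⟨⟨h0, h1⟩, le_trans (binomCDF_mono_k h0 h1 h n) hF⟩
    · exact Or.inr hθ

lemma UBinom_extract {k n : ℕ} {δ ε : ℝ} (hU : UBinom k n δ ≤ ε) (hε1 : ε < 1) :
    ∃ θ₀, 0 ≤ θ₀ ∧ θ₀ ≤ 1 ∧ θ₀ ≤ ε ∧ binomCDF k n θ₀ ≤ δ := by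
  set S : Set ℝ := {θ : ℝ | θ ∈ Set.Icc (0 : ℝ) 1 ∧ binomCDF k n θ ≤ δ} with hSdef
  by_cases hS : S.Nonempty
  · have hclosed : IsClosed S := by
      have : S = Set.Icc (0:ℝ) 1 ∩ (fun θ => binomCDF k n θ) ⁻¹' Set.Iic δ := by
        ext θ; simp [hSdef, Set.mem_Icc]
      rw [this]
      exact isClosed_Icc.inter (IsClosed.preimage (binomCDF_continuous k n) isClosed_Iic)
    have hbdd : BddBelow S := ⟨0, fun θ hθ => hθ.1.1⟩
    have hmem : sInf S ∈ S := hclosed.csInf_mem hS hbdd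
    have hunion : sInf (S ∪ {1}) = min (sInf S) 1 := by
      rw [csInf_union hbdd hS (bddBelow_singleton) (Set.singleton_nonempty 1), csInf_singleton]
    rw [UBinom, ← hSdef, hunion] at hU
    have : sInf S ≤ ε := by
      rcases le_total (sInf S) 1 with h | h
      · rwa [min_eq_left h] at hU
      · rw [min_eq_right h] at hU; linarith
    exact ⟨sInf S, hmem.1.1, hmem.1.2, this, hmem.2⟩
  · exfalso
    rw [Set.not_nonempty_iff_eq_empty] at hS
    rw [UBinom, ← hSdef, hS, Set.empty_union, csInf_singleton] at hU
    linarith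

/-! ### The binomial tail bound -/

lemma measure_tail_le {α : Type*} [MeasurableSpace α] (D : Measure α) [IsProbabilityMeasure D]
    {S : Set α} (hS : MeasurableSet S) (n : ℕ) {δ : ℝ} (hδ0 : 0 ≤ δ) :
    (Measure.pi fun _ : Fin n => D)
        {z | binomCDF (cnt S n z) n (D S).toReal ≤ δ} ≤ ENNReal.ofReal δ := by
  classical
  set θ := (D S).toReal with hθ
  set P : ℕ → Prop := fun m => binomCDF m n θ ≤ δ with hP
  by_cases h : ∃ m, m ≤ n ∧ P m
  · obtain ⟨m, hm, hPm⟩ := h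
    set kstar := Nat.findGreatest P n with hk
    have hPk : P kstar := Nat.findGreatest_spec hm hPm
    have hsub : {z : Fin n → α | binomCDF (cnt S n z) n θ ≤ δ}
        ⊆ {z | cnt S n z ≤ kstar} := by
      intro z hz
      exact Nat.le_findGreatest (cnt_le S n z) hz
    calc (Measure.pi fun _ : Fin n => D) {z | binomCDF (cnt S n z) n θ ≤ δ}
        ≤ (Measure.pi fun _ : Fin n => D) {z | cnt S n z ≤ kstar} := measure_mono hsub
      _ = ENNReal.ofReal (binomCDF kstar n θ) := measure_cnt_le D hS n kstar
      _ ≤ ENNReal.ofReal δ := ENNReal.ofReal_le_ofReal hPk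
  · have : {z : Fin n → α | binomCDF (cnt S n z) n θ ≤ δ} = ∅ := by
      ext z
      simp only [Set.mem_setOf_eq, Set.mem_empty_iff_false, iff_false]
      intro hz
      exact h ⟨cnt S n z, cnt_le S n z, hz⟩
    rw [this, measure_empty]
    exact zero_le

/-- Theorem 1 of the paper (PAC guarantee of the binomial-tail conformal set learning
algorithm `𝒜_Binom`): for nested failure events `E_τ` indexed by a finite grid `ℋ`
containing `0` with `E_0 = ∅`, the parameter `τ̂` chosen as the largest grid point whose
empirical failure count passes the binomial tail test controls the true risk
`D(E_{τ̂})` at level `ε` with probability at least `1 − δ` over the i.i.d. sample. -/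
theorem pac_conformal_binomial {α : Type*} [MeasurableSpace α]
    (D : Measure α) [IsProbabilityMeasure D]
    (H : Finset ℝ) (hHne : H.Nonempty) (hH0 : (0 : ℝ) ∈ H) (hHnonneg : ∀ τ ∈ H, 0 ≤ τ)
    (E : ℝ → Set α) (hEmeas : ∀ τ ∈ H, MeasurableSet (E τ))
    (hEmono : ∀ τ₁ ∈ H, ∀ τ₂ ∈ H, τ₁ ≤ τ₂ → E τ₁ ⊆ E τ₂)
    (hE0 : E 0 = ∅)
    (ε δ : ℝ) (hε : ε ∈ Set.Ioo (0 : ℝ) 1) (hδ : δ ∈ Set.Ioo (0 : ℝ) 1) (n : ℕ)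
    (kcount : (Fin n → α) → ℝ → ℕ)
    (hkcount : ∀ z τ, kcount z τ = (Finset.univ.filter fun i : Fin n => z i ∈ E τ).card)
    (tauhat : (Fin n → α) → ℝ)
    (htauhat : ∀ z,
      tauhat z =
        if h : (H.filter fun τ => UBinom (kcount z τ) n δ ≤ ε).Nonempty
        then (H.filter fun τ => UBinom (kcount z τ) n δ ≤ ε).max' h
        else 0) :
    (Measure.pi fun _ : Fin n => D)
        {z : Fin n → α | D (E (tauhat z)) ≤ ENNReal.ofReal ε}
      ≥ 1 - ENNReal.ofReal δ := by
  classical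
  set μ := Measure.pi fun _ : Fin n => D with hμ
  set good := {z : Fin n → α | D (E (tauhat z)) ≤ ENNReal.ofReal ε} with hgood
  have hkc : ∀ z τ, kcount z τ = cnt (E τ) n z := fun z τ => hkcount z τ
  -- τ̂ is always in H
  have htauH : ∀ z, tauhat z ∈ H := by
    intro z
    rw [htauhat z]
    split
    · next h => exact (Finset.mem_filter.1 ((H.filter _).max'_mem h)).1
    · exact hH0
  -- it suffices to bound the bad event
  suffices hb : μ goodᶜ ≤ ENNReal.ofReal δ by
    have h1 : (1 : ℝ≥0∞) ≤ μ good + μ goodᶜ := by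
      have := measure_union_le (μ := μ) good goodᶜ
      rwa [Set.union_compl_self, measure_univ] at this
    rw [ge_iff_le, tsub_le_iff_right]
    exact le_trans h1 (by exact add_le_add_right hb _)
  -- the set of grid points with too-large risk
  set Hbad := H.filter (fun τ => ENNReal.ofReal ε < D (E τ)) with hHbad
  by_cases hbad : Hbad.Nonempty
  · -- let τ' be the smallest risky grid point
    set τ' := Hbad.min' hbad with hτ'
    have hτ'mem : τ' ∈ Finset.filter (fun τ => ENNReal.ofReal ε < D (E τ)) H :=
      Hbad.min'_mem hbad
    obtain ⟨hτ'H, hτ'risk⟩ := Finset.mem_filter.1 hτ'mem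
    have hτ'meas : MeasurableSet (E τ') := hEmeas τ' hτ'H
    set θ' := (D (E τ')).toReal with hθ'
    have hθ'ε : ε < θ' :=
      (ENNReal.ofReal_lt_iff_lt_toReal (le_of_lt hε.1) (measure_ne_top D _)).1 hτ'risk
    have hθ'1 : θ' ≤ 1 := by
      have := prob_le_one (μ := D) (s := E τ')
      simpa using ENNReal.toReal_mono (by simp) this
    -- bad event is contained in the binomial tail event at τ'
    have hsub : goodᶜ ⊆ {z | binomCDF (cnt (E τ') n z) n θ' ≤ δ} := by
      intro z hz
      simp only [hgood, Set.mem_compl_iff, Set.mem_setOf_eq, not_le] at hz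
      -- the acceptance set is nonempty
      have hne : (H.filter fun τ => UBinom (kcount z τ) n δ ≤ ε).Nonempty := by
        by_contra hcon
        rw [htauhat z, dif_neg hcon] at hz
        rw [hE0] at hz
        simp at hz
      have htz : tauhat z = (H.filter fun τ => UBinom (kcount z τ) n δ ≤ ε).max' hne := by
        rw [htauhat z, dif_pos hne]
      have htzmem := Finset.mem_filter.1
        (htz ▸ (H.filter fun τ => UBinom (kcount z τ) n δ ≤ ε).max'_mem hne)
      have htzH : tauhat z ∈ H := htzmem.1
      have htzU : UBinom (kcount z (tauhat z)) n δ ≤ ε := htzmem.2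
      -- τ̂ z is risky, hence τ' ≤ τ̂ z
      have htzbad : tauhat z ∈ Hbad := by
        rw [hHbad, Finset.mem_filter]
        exact ⟨htzH, hz⟩
      have hle : τ' ≤ tauhat z := Finset.min'_le _ _ htzbad
      -- counts are monotone
      have hcle : kcount z τ' ≤ kcount z (tauhat z) := by
        rw [hkc, hkc]
        exact cnt_mono (hEmono τ' hτ'H (tauhat z) htzH hle) n z
      have hU' : UBinom (kcount z τ') n δ ≤ ε :=
        le_trans (UBinom_mono hcle n δ) htzU
      obtain ⟨θ₀, hθ₀0, hθ₀1, hθ₀ε, hθ₀F⟩ := UBinom_extract hU' hε.2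
      have : binomCDF (kcount z τ') n θ' ≤ binomCDF (kcount z τ') n θ₀ :=
        binomCDF_anti _ n hθ₀0 (le_trans hθ₀ε (le_of_lt hθ'ε)) hθ'1
      have hfin : binomCDF (cnt (E τ') n z) n θ' ≤ δ := by
        rw [← hkc]
        exact le_trans this hθ₀F
      exact hfin
    calc μ goodᶜ ≤ μ {z | binomCDF (cnt (E τ') n z) n θ' ≤ δ} := measure_mono hsub
      _ ≤ ENNReal.ofReal δ := measure_tail_le D hτ'meas n (le_of_lt hδ.1)
  · -- no grid point is risky: the good event is everything
    have : goodᶜ = ∅ := by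
      rw [Set.eq_empty_iff_forall_notMem]
      intro z hz
      simp only [hgood, Set.mem_compl_iff, Set.mem_setOf_eq, not_le] at hz
      exact hbad ⟨tauhat z, Finset.mem_filter.2 ⟨htauH z, hz⟩⟩
    rw [this, measure_empty]
    exact zero_le
end

section
/- Let (Ω, 𝒜, P) be a probability space, let T : Ω → ℝ be a measurable random variable with 0 ≤ T ≤ 1 almost surely, and let A ∈ 𝒜 be an event such that the conditional expectation of the indicator of A given the σ-algebra generated by T equals T almost surely (perfect calibration: P(A | T = t) = t for all t). Then for all 0 ≤ τ₁ ≤ τ₂ with P(T ≥ τ₂) > 0, the conditional false discovery rate is monotonically nonincreasing in the threshold: P(Aᶜ ∩ {T ≥ τ₂}) / P(T ≥ τ₂) ≤ P(Aᶜ ∩ {T ≥ τ₁}) / P(T ≥ τ₁). -/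
open MeasureTheory
open scoped ENNReal

/-- Lemma 4 of the paper in measure-theoretic form: if the confidence score `T` is
perfectly calibrated for the event `A` (i.e. the conditional expectation of the
indicator of `A` given the σ-algebra generated by `T` is `T` itself), then the
conditional false discovery rate `P(Aᶜ | T ≥ τ)` is monotonically nonincreasing in
the threshold `τ`. -/
theorem calibrated_fdr_antitone {Ω : Type*} [MeasurableSpace Ω]
    (P : Measure Ω) [IsProbabilityMeasure P]
    (T : Ω → ℝ) (hT : Measurable T)
    (hT01 : ∀ᵐ ω ∂P, T ω ∈ Set.Icc (0 : ℝ) 1)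
    (A : Set Ω) (hA : MeasurableSet A)
    (hcal :
      P[A.indicator (fun _ => (1 : ℝ)) |
        MeasurableSpace.comap T (inferInstance : MeasurableSpace ℝ)] =ᵐ[P] T)
    (τ₁ τ₂ : ℝ) (h0 : 0 ≤ τ₁) (h12 : τ₁ ≤ τ₂)
    (hpos : P {ω | τ₂ ≤ T ω} ≠ 0) :
    (P (Aᶜ ∩ {ω | τ₂ ≤ T ω})).toReal / (P {ω | τ₂ ≤ T ω}).toReal
      ≤ (P (Aᶜ ∩ {ω | τ₁ ≤ T ω})).toReal / (P {ω | τ₁ ≤ T ω}).toReal := by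
  have hm : MeasurableSpace.comap T (inferInstance : MeasurableSpace ℝ)
      ≤ (inferInstance : MeasurableSpace Ω) := hT.comap_le
  have hindA : Integrable (A.indicator (fun _ => (1 : ℝ))) P :=
    (integrable_const (1 : ℝ)).indicator hA
  have hTint : Integrable T P := integrable_condExp.congr hcal
  -- measurability of threshold sets
  have hSmeas : ∀ τ : ℝ, MeasurableSet {ω | τ ≤ T ω} := fun τ => hT measurableSet_Ici
  have hSm : ∀ τ : ℝ, MeasurableSet[MeasurableSpace.comap T
      (inferInstance : MeasurableSpace ℝ)] {ω | τ ≤ T ω} := fun τ =>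
    ⟨Set.Ici τ, measurableSet_Ici, rfl⟩
  -- key identity : P(Aᶜ ∩ S) = ∫_S (1 - T)
  have key : ∀ S : Set Ω, MeasurableSet[MeasurableSpace.comap T
      (inferInstance : MeasurableSpace ℝ)] S →
      (P (Aᶜ ∩ S)).toReal = ∫ ω in S, (1 - T ω) ∂P := by
    intro S hSm'
    have hS : MeasurableSet S := hm S hSm'
    have hTS : ∫ ω in S, T ω ∂P = (P (A ∩ S)).toReal := by
      have h1 : ∫ ω in S, T ω ∂P
          = ∫ ω in S, (P[A.indicator (fun _ => (1 : ℝ)) | MeasurableSpace.comap T (inferInstance : MeasurableSpace ℝ)]) ω ∂P :=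
        setIntegral_congr_ae hS (hcal.symm.mono fun ω h _ => h)
      have h2 : ∫ ω in S, (P[A.indicator (fun _ => (1 : ℝ)) | MeasurableSpace.comap T (inferInstance : MeasurableSpace ℝ)]) ω ∂P
          = ∫ ω in S, A.indicator (fun _ => (1 : ℝ)) ω ∂P :=
        setIntegral_condExp hm hindA hSm'
      have h3 : ∫ ω in S, A.indicator (fun _ => (1 : ℝ)) ω ∂P
          = ∫ ω in S ∩ A, (1 : ℝ) ∂P := setIntegral_indicator hA
      rw [h1, h2, h3, setIntegral_const, measureReal_def, smul_eq_mul, mul_one, Set.inter_comm]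
    have hsub : ∫ ω in S, (1 - T ω) ∂P
        = (P S).toReal - (P (A ∩ S)).toReal := by
      rw [integral_sub (integrableOn_const (C := (1 : ℝ)) (measure_ne_top P S))
        hTint.integrableOn, setIntegral_const, measureReal_def, smul_eq_mul, mul_one, hTS]
    have hsplit : P (S ∩ A) + P (S \ A) = P S := measure_inter_add_diff S hA
    have hdiff : Aᶜ ∩ S = S \ A := by
      rw [Set.diff_eq, Set.inter_comm]
    rw [hsub, hdiff]
    have h4 : (P (S ∩ A)).toReal + (P (S \ A)).toReal = (P S).toReal := by
      rw [← ENNReal.toReal_add (measure_ne_top P _) (measure_ne_top P _), hsplit]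
    rw [Set.inter_comm S A] at h4
    linarith
  set S₁ := {ω | τ₁ ≤ T ω} with hS₁def
  set S₂ := {ω | τ₂ ≤ T ω} with hS₂def
  set B := S₁ \ S₂ with hBdef
  have hSsub : S₂ ⊆ S₁ := fun ω h => le_trans h12 h
  have hBm : MeasurableSet B := (hSmeas τ₁).diff (hSmeas τ₂)
  -- τ₂ ≤ 1
  have hτ₂ : τ₂ ≤ 1 := by
    by_contra h
    push_neg at h
    apply hpos
    refine measure_mono_null (fun ω hω => ?_) (ae_iff.mp hT01)
    intro hmem
    exact absurd (le_trans hω hmem.2) (not_le.mpr h)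
  -- integrability of 1 - T on sets
  have hgint : Integrable (fun ω => 1 - T ω) P := (integrable_const (1 : ℝ)).sub hTint
  -- split S₁ = S₂ ∪ B
  have hunion : S₂ ∪ B = S₁ := Set.union_diff_cancel hSsub
  have hdisj : Disjoint S₂ B := Set.disjoint_sdiff_right
  have hIsplit : ∫ ω in S₁, (1 - T ω) ∂P
      = (∫ ω in S₂, (1 - T ω) ∂P) + ∫ ω in B, (1 - T ω) ∂P := by
    rw [← hunion, setIntegral_union hdisj hBm hgint.integrableOn hgint.integrableOn]
  have hμsplit : (P S₁).toReal = (P S₂).toReal + (P B).toReal := by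
    rw [← hunion, measure_union hdisj hBm,
      ENNReal.toReal_add (measure_ne_top P _) (measure_ne_top P _)]
  -- bounds
  have hbound2 : ∫ ω in S₂, (1 - T ω) ∂P ≤ (1 - τ₂) * (P S₂).toReal := by
    have : ∫ ω in S₂, (1 - T ω) ∂P ≤ ∫ ω in S₂, (1 - τ₂) ∂P := by
      refine integral_mono_ae hgint.integrableOn
        (integrableOn_const (measure_ne_top P S₂)) ?_
      filter_upwards [ae_restrict_mem (hSmeas τ₂)] with ω hω
      have hω' : τ₂ ≤ T ω := hω
      linarith
    rwa [setIntegral_const, measureReal_def, smul_eq_mul, mul_comm] at this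
  have hboundB : (1 - τ₂) * (P B).toReal ≤ ∫ ω in B, (1 - T ω) ∂P := by
    have : ∫ ω in B, (1 - τ₂) ∂P ≤ ∫ ω in B, (1 - T ω) ∂P := by
      refine integral_mono_ae (integrableOn_const (measure_ne_top P B))
        hgint.integrableOn ?_
      filter_upwards [ae_restrict_mem hBm] with ω hω
      have : ¬ τ₂ ≤ T ω := hω.2
      push_neg at this
      linarith
    rwa [setIntegral_const, measureReal_def, smul_eq_mul, mul_comm] at this
  -- positivity
  have hμ₂pos : 0 < (P S₂).toReal := ENNReal.toReal_pos hpos (measure_ne_top P _)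
  have hμ₁pos : 0 < (P S₁).toReal := by
    have hb : (0:ℝ) ≤ (P B).toReal := ENNReal.toReal_nonneg
    linarith [hμsplit]
  rw [key S₂ (hSm τ₂), key S₁ (hSm τ₁)]
  rw [div_le_div_iff₀ hμ₂pos hμ₁pos]
  have hb : (0:ℝ) ≤ (P B).toReal := ENNReal.toReal_nonneg
  have hτ : (0:ℝ) ≤ 1 - τ₂ := by linarith
  have h1 : (∫ ω in S₂, (1 - T ω) ∂P) * (P B).toReal
      ≤ (∫ ω in B, (1 - T ω) ∂P) * (P S₂).toReal :=
    calc (∫ ω in S₂, (1 - T ω) ∂P) * (P B).toReal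
        ≤ ((1 - τ₂) * (P S₂).toReal) * (P B).toReal :=
          mul_le_mul_of_nonneg_right hbound2 hb
      _ = ((1 - τ₂) * (P B).toReal) * (P S₂).toReal := by ring
      _ ≤ (∫ ω in B, (1 - T ω) ∂P) * (P S₂).toReal :=
          mul_le_mul_of_nonneg_right hboundB hμ₂pos.le
  rw [hIsplit, hμsplit]
  nlinarith [h1]
end

section
/- Let (Ω, 𝒜, P) be a probability space and let T : Ω → ℝ be a nonnegative integrable random variable. Then for all 0 ≤ τ₁ ≤ τ₂ with P(T ≥ τ₂) > 0, (∫ T·1_{T ≥ τ₁} dP) / P(T ≥ τ₁) ≤ (∫ T·1_{T ≥ τ₂} dP) / P(T ≥ τ₂); that is, the conditional mean of T given T ≥ τ is monotonically nondecreasing in the threshold τ. -/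
open MeasureTheory
open scoped ENNReal

/-- The conditional mean of a nonnegative integrable random variable `T` given
`T ≥ τ` is monotonically nondecreasing in the threshold `τ`. -/
theorem conditional_mean_monotone {Ω : Type*} [MeasurableSpace Ω]
    (P : Measure Ω) [IsProbabilityMeasure P]
    (T : Ω → ℝ) (hTnonneg : ∀ ω, 0 ≤ T ω) (hTint : Integrable T P)
    (τ₁ τ₂ : ℝ) (h0 : 0 ≤ τ₁) (h12 : τ₁ ≤ τ₂)
    (hpos : P {ω | τ₂ ≤ T ω} ≠ 0) :
    (∫ ω in {ω | τ₁ ≤ T ω}, T ω ∂P) / (P {ω | τ₁ ≤ T ω}).toReal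
      ≤ (∫ ω in {ω | τ₂ ≤ T ω}, T ω ∂P) / (P {ω | τ₂ ≤ T ω}).toReal := by
  -- replace T by a measurable representative
  obtain ⟨T', hT'sm, hae⟩ := hTint.aestronglyMeasurable
  have hT'meas : Measurable T' := hT'sm.measurable
  have hT'int : Integrable T' P := hTint.congr hae
  have hset : ∀ τ : ℝ, {ω | τ ≤ T ω} =ᵐ[P] {ω | τ ≤ T' ω} := by
    intro τ
    filter_upwards [hae] with ω h
    show (τ ≤ T ω) = (τ ≤ T' ω)
    rw [h]
  have hmeas_eq : ∀ τ : ℝ, P {ω | τ ≤ T ω} = P {ω | τ ≤ T' ω} :=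
    fun τ => measure_congr (hset τ)
  have hint_eq : ∀ τ : ℝ,
      (∫ ω in {ω | τ ≤ T ω}, T ω ∂P) = ∫ ω in {ω | τ ≤ T' ω}, T' ω ∂P := by
    intro τ
    rw [Measure.restrict_congr_set (hset τ)]
    exact integral_congr_ae (ae_restrict_of_ae hae)
  rw [hmeas_eq, hmeas_eq, hint_eq, hint_eq]
  rw [hmeas_eq] at hpos
  set A₁ := {ω | τ₁ ≤ T' ω} with hA₁def
  set A₂ := {ω | τ₂ ≤ T' ω} with hA₂def
  have hA₁ : MeasurableSet A₁ := measurableSet_le measurable_const hT'meas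
  have hA₂ : MeasurableSet A₂ := measurableSet_le measurable_const hT'meas
  have hsub : A₂ ⊆ A₁ := fun ω h => le_trans h12 h
  have hS : MeasurableSet (A₁ \ A₂) := hA₁.diff hA₂
  -- measures as reals
  set p₁ := (P A₁).toReal with hp₁def
  set p₂ := (P A₂).toReal with hp₂def
  set q := (P (A₁ \ A₂)).toReal with hqdef
  have hq : 0 ≤ q := ENNReal.toReal_nonneg
  have hp₂pos : 0 < p₂ :=
    ENNReal.toReal_pos hpos (measure_ne_top P A₂)
  have hunion : A₂ ∪ (A₁ \ A₂) = A₁ := Set.union_diff_cancel hsub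
  have hdisj : Disjoint A₂ (A₁ \ A₂) := Set.disjoint_sdiff_right
  have hp : p₁ = p₂ + q := by
    rw [hp₁def, ← hunion, measure_union hdisj hS,
      ENNReal.toReal_add (measure_ne_top P _) (measure_ne_top P _)]
  have hp₁pos : 0 < p₁ := by rw [hp]; linarith
  -- split integral
  have hI : (∫ ω in A₁, T' ω ∂P)
      = (∫ ω in A₂, T' ω ∂P) + ∫ ω in A₁ \ A₂, T' ω ∂P := by
    have h := setIntegral_union hdisj hS hT'int.integrableOn hT'int.integrableOn
      (μ := P) (f := T')
    rwa [hunion] at h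
  -- lower bound on A₂ part
  have hlb : τ₂ * p₂ ≤ ∫ ω in A₂, T' ω ∂P :=
    setIntegral_ge_of_const_le_real hA₂ (measure_ne_top P A₂)
      (fun x hx => hx) hT'int.integrableOn
  -- upper bound on the difference part
  have hub : (∫ ω in A₁ \ A₂, T' ω ∂P) ≤ τ₂ * q := by
    have : (∫ ω in A₁ \ A₂, T' ω ∂P) ≤ ∫ _ in A₁ \ A₂, τ₂ ∂P := by
      refine setIntegral_mono_on hT'int.integrableOn integrableOn_const hS ?_
      · intro x hx
        exact le_of_lt (lt_of_not_ge hx.2)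
    simpa [setIntegral_const, smul_eq_mul, mul_comm, measureReal_def] using this
  rw [div_le_div_iff₀ hp₁pos hp₂pos, hI, hp]
  nlinarith [mul_le_mul_of_nonneg_right hub hp₂pos.le,
    mul_le_mul_of_nonneg_right hlb hq]
end
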